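/- Let A be a commutative local ring with maximal ideal m, and let M be a submodule of a direct sum ⊕_{i∈I} N_i of finitely generated A-modules N_i, such that M = ⊕_{i∈I} M_i with each M_i ⊆ N_i. If M/mM is finitely generated over A/m, then M is finitely generated over A. -/

import Mathlib

open DirectSum

/-- Nakayama-type lemma of Emerton–Helm: over a Noetherian local ring `A`,
a submodule `M = ⊕ Mᵢ` of a direct sum `⊕ Nᵢ` of finitely generated modules with
`M/mM` finitely generated is itself finitely generated. -/
theorem stmt7 (A : Type*) [CommRing A] [IsLocalRing A] [IsNoetherianRing A]
    (ι : Type*) [DecidableEq ι] (N : ι → Type*)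
    [∀ i, AddCommGroup (N i)] [∀ i, Module A (N i)] [∀ i, Module.Finite A (N i)]
    (Mi : ∀ i, Submodule A (N i))
    (M : Submodule A (⨁ i, N i))
    (hM : ∀ x : ⨁ i, N i, x ∈ M ↔ ∀ i, x i ∈ Mi i)
    (hfg : Module.Finite A
      (↥M ⧸ (IsLocalRing.maximalIdeal A • (⊤ : Submodule A ↥M)))) :
    Module.Finite A ↥M := by
  classical
  set m := IsLocalRing.maximalIdeal A with hm
  set p : Submodule A ↥M := m • ⊤ with hp
  have hMiFG : ∀ i, (Mi i).FG := fun i => IsNoetherian.noetherian (Mi i)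
  have hle : ∀ i, (Mi i).map (DirectSum.lof A ι N i) ≤ M := by
    rintro i _ ⟨y, hy, rfl⟩
    rw [hM]
    intro j
    by_cases h : j = i
    · subst h; simpa using hy
    · rw [DirectSum.lof_eq_of, DirectSum.of_eq_of_ne _ _ _ h]
      exact (Mi j).zero_mem
  -- projections
  set f : ∀ i, ↥M →ₗ[A] N i :=
    fun i => (DirectSum.component A ι N i).comp M.subtype with hf
  have hfx : ∀ i (x : ↥M), f i x = (x : ⨁ i, N i) i := fun i x => rfl
  have hrange : ∀ i, Submodule.map (f i) ⊤ = Mi i := by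
    intro i
    apply le_antisymm
    · rintro _ ⟨⟨x, hx⟩, -, rfl⟩
      exact (hM x).mp hx i
    · intro y hy
      exact ⟨⟨DirectSum.lof A ι N i y, hle i ⟨y, hy, rfl⟩⟩, trivial,
        by rw [hfx]; exact DirectSum.lof_apply A i y⟩
  -- generators of quotient
  obtain ⟨s, hs⟩ := hfg.1
  have hsurj := p.mkQ_surjective
  choose g hg using hsurj
  set t : Finset ↥M := s.image g with ht
  have hsup : Submodule.span A (t : Set ↥M) ⊔ p = ⊤ := by
    have h1 : Submodule.map p.mkQ (Submodule.span A (t : Set ↥M)) = ⊤ := by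
      rw [Submodule.map_span, ← hs]
      congr 1
      ext q
      simp only [ht, Finset.coe_image, Set.mem_image]
      constructor
      · rintro ⟨_, ⟨q', hq', rfl⟩, rfl⟩; rw [hg]; exact hq'
      · intro hq; exact ⟨g q, ⟨q, hq, rfl⟩, hg q⟩
    have := congrArg (Submodule.comap p.mkQ) h1
    rwa [Submodule.comap_map_mkQ, Submodule.comap_top, sup_comm] at this
  -- finite support set
  set J : Finset ι := t.biUnion (fun x => DFinsupp.support (x : ⨁ i, N i)) with hJ
  have hbot : ∀ i ∉ J, Mi i = ⊥ := by
    intro i hi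
    refine Submodule.eq_bot_of_le_smul_of_le_jacobson_bot m (Mi i) (hMiFG i) ?_ ?_
    · have h1 : Submodule.map (f i) (Submodule.span A (t : Set ↥M)) = ⊥ := by
        rw [Submodule.map_span]
        refine (Submodule.span_eq_bot).mpr ?_
        rintro _ ⟨x, hx, rfl⟩
        rw [hfx]
        by_contra h
        exact hi (Finset.mem_biUnion.mpr ⟨x, hx, DFinsupp.mem_support_iff.mpr h⟩)
      have h2 : Submodule.map (f i) p = m • Mi i := by
        rw [hp, Submodule.map_smul'', hrange]
      have heq : Mi i = m • Mi i := calc Mi i = Submodule.map (f i) ⊤ := (hrange i).symm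
        _ = Submodule.map (f i) (Submodule.span A (t : Set ↥M) ⊔ p) := by rw [hsup]
        _ = Submodule.map (f i) (Submodule.span A (t : Set ↥M)) ⊔ Submodule.map (f i) p := Submodule.map_sup _ _ _
        _ = ⊥ ⊔ m • Mi i := by rw [h1, h2]
        _ = m • Mi i := bot_sup_eq _
      exact heq.le
    · rw [hm, ← IsLocalRing.jacobson_eq_maximalIdeal (⊥ : Ideal A) bot_ne_top]
  -- M is the finite sup
  have hMeq : M = ⨆ i ∈ J, (Mi i).map (DirectSum.lof A ι N i) := by
    apply le_antisymm
    · intro x hx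
      have hxrw : x = ∑ i ∈ DFinsupp.support x, DirectSum.lof A ι N i (x i) := by
        exact (DirectSum.sum_support_of x).symm
      rw [hxrw]
      refine Submodule.sum_mem _ ?_
      intro i hi
      have hxi : x i ∈ Mi i := (hM x).mp hx i
      have hiJ : i ∈ J := by
        by_contra h
        rw [hbot i h] at hxi
        exact DFinsupp.mem_support_iff.mp hi hxi
      exact Submodule.mem_iSup_of_mem i (Submodule.mem_iSup_of_mem hiJ ⟨x i, hxi, rfl⟩)
    · exact iSup_le fun i => iSup_le fun _ => hle i
  rw [Module.Finite.iff_fg, hMeq]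
  apply Submodule.fg_biSup
  intro i _
  exact Submodule.FG.map _ (hMiFG i)
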